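/- arXiv:1603.08598 — 3 statements merged into one kernel-verified Lean document; each statement's English description precedes it below -/
import Mathlib

section
/- Let K be a Henselian valued field of characteristic zero with residue characteristic p > 0 and ramification index e > 0, and let n > e not be divisible by p. Then for every x in the valuation ring O_K, the polynomial y^n − p·x^n − 1 has a root in K. -/
/-- A valued field (with additive valuation `v`) is Henselian if Hensel's lemma holds:
whenever `f` is a polynomial with coefficients in the valuation ring and `a` is in the
valuation ring with `v (f a) > 2 · v (f' a)`, then `f` has a root in the valuation ring. -/
def AddValuation.IsHenselian {K Γ : Type*} [Field K] [AddCommGroup Γ] [LinearOrder Γ] [IsOrderedAddMonoid Γ]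
    (v : AddValuation K (WithTop Γ)) : Prop :=
  ∀ f : Polynomial K, (∀ i, 0 ≤ v (f.coeff i)) →
    ∀ a : K, 0 ≤ v a →
      2 • v (Polynomial.eval a (Polynomial.derivative f)) < v (Polynomial.eval a f) →
      ∃ b : K, 0 ≤ v b ∧ Polynomial.eval b f = 0

section
variable {K Γ : Type*} [Field K] [CharZero K] [AddCommGroup Γ] [LinearOrder Γ] [IsOrderedAddMonoid Γ]
  (v : AddValuation K (WithTop Γ))

lemma aux_nat_nonneg : ∀ m : ℕ, 0 ≤ v (m : K) := by
  intro m
  induction m with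
  | zero => simp [v.map_zero]
  | succ k ih =>
    push_cast
    refine le_trans (le_min ih ?_) (v.map_add _ _)
    simp [v.map_one]

lemma aux_int_nonneg (m : ℤ) : 0 ≤ v (m : K) := by
  obtain ⟨k, rfl | rfl⟩ := Int.eq_nat_or_neg m
  · exact_mod_cast aux_nat_nonneg v k
  · push_cast
    rw [v.map_neg]
    exact aux_nat_nonneg v k

lemma aux_coprime_val {p n : ℕ} (hp : p.Prime) (hres : 0 < v (p : K)) (hpn : ¬ p ∣ n) :
    v (n : K) ≤ 0 := by
  by_contra h
  push_neg at h
  have hcop : IsCoprime (n : ℤ) (p : ℤ) := by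
    rw [Int.isCoprime_iff_gcd_eq_one]
    exact_mod_cast Nat.Coprime.gcd_eq_one ((Nat.Prime.coprime_iff_not_dvd hp).2 hpn).symm
  obtain ⟨a, b, hab⟩ := hcop
  have hK : (a : K) * n + (b : K) * p = 1 := by exact_mod_cast congrArg (Int.cast : ℤ → K) hab
  have h1 : (0 : WithTop Γ) < v ((a : K) * n + (b : K) * p) := by
    refine lt_of_lt_of_le ?_ (v.map_add _ _)
    refine lt_min ?_ ?_
    · rw [v.map_mul]
      exact lt_of_lt_of_le h (le_add_of_nonneg_left (aux_int_nonneg v a))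
    · rw [v.map_mul]
      exact lt_of_lt_of_le hres (le_add_of_nonneg_left (aux_int_nonneg v b))
  rw [hK, v.map_one] at h1
  exact lt_irrefl _ h1
end

/-- The "if" direction of Bélair's lemma: in a Henselian valued field of characteristic
zero, residue characteristic `p > 0` and ramification index `e > 0`, for `n > e` not
divisible by `p`, the polynomial `y ^ n - p * x ^ n - 1` has a root in `K` for every `x`
in the valuation ring. -/
theorem root_of_henselian_for_integral_x
    {K Γ : Type*} [Field K] [CharZero K] [AddCommGroup Γ] [LinearOrder Γ] [IsOrderedAddMonoid Γ]
    (v : AddValuation K (WithTop Γ)) (hhens : v.IsHenselian)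
    (p : ℕ) (hp : p.Prime) (hres : 0 < v (p : K))
    (e : ℕ) (he : Nat.card {γ : Γ | 0 < γ ∧ (γ : WithTop Γ) ≤ v (p : K)} = e) (he0 : 0 < e)
    (n : ℕ) (hne : e < n) (hpn : ¬ (p ∣ n)) :
    ∀ x : K, 0 ≤ v x → ∃ y : K, y ^ n - (p : K) * x ^ n - 1 = 0 := by
  intro x hx
  set f : Polynomial K := Polynomial.X ^ n - Polynomial.C ((p : K) * x ^ n + 1) with hf
  have hcoeff : ∀ i, 0 ≤ v (f.coeff i) := by
    intro i
    rw [hf, Polynomial.coeff_sub, Polynomial.coeff_X_pow, Polynomial.coeff_C]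
    have hterm : 0 ≤ v ((p : K) * x ^ n + 1) := by
      refine le_trans (le_min ?_ ?_) (v.map_add _ _)
      · rw [v.map_mul, v.map_pow]
        exact add_nonneg (aux_nat_nonneg v p) (nsmul_nonneg hx n)
      · rw [v.map_one]
    rcases eq_or_ne i n with hin | hin
    · rw [if_pos hin]
      rcases eq_or_ne i 0 with hi0 | hi0
      · rw [if_pos hi0]
        refine le_trans (le_min ?_ ?_) (v.map_sub _ _)
        · rw [v.map_one]
        · exact hterm
      · rw [if_neg hi0, sub_zero, v.map_one]
    · rw [if_neg hin]
      rcases eq_or_ne i 0 with hi0 | hi0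
      · rw [if_pos hi0, zero_sub, v.map_neg]
        exact hterm
      · rw [if_neg hi0, sub_zero, v.map_zero]
        exact le_top
  have heval : Polynomial.eval 1 f = -((p : K) * x ^ n) := by
    rw [hf, Polynomial.eval_sub, Polynomial.eval_pow, Polynomial.eval_X, Polynomial.eval_C]
    ring
  have hevalv : v (Polynomial.eval 1 f) = v ((p:K)) + n • v x := by
    rw [heval, v.map_neg, v.map_mul, v.map_pow]
  have hder : Polynomial.eval 1 (Polynomial.derivative f) = (n : K) := by
    rw [hf, map_sub, Polynomial.derivative_C, sub_zero, Polynomial.derivative_X_pow]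
    simp
  have hlt : 2 • v (Polynomial.eval 1 (Polynomial.derivative f)) < v (Polynomial.eval 1 f) := by
    rw [hder, hevalv]
    have h1 : 2 • v ((n : K)) ≤ 0 := by
      have := aux_coprime_val v hp hres hpn
      calc 2 • v ((n:K)) = v ((n:K)) + v ((n:K)) := two_nsmul _
        _ ≤ 0 := by exact add_nonpos this this
    refine lt_of_le_of_lt h1 ?_
    exact lt_of_lt_of_le hres (le_add_of_nonneg_right (nsmul_nonneg hx n))
  obtain ⟨b, hb0, hb⟩ := hhens f hcoeff 1 (by simp [v.map_one]) hlt
  refine ⟨b, ?_⟩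
  rw [hf] at hb
  simpa [sub_sub] using hb
end

section
/- Let K be a valued field of characteristic zero with residue characteristic p > 0. Let Δ be the smallest convex subgroup of the value group Γ containing v(p), and let v̇ : K → Γ/Δ ∪ {∞} be the coarse valuation, composing v with the quotient map Γ → Γ/Δ. Then the valuation ring O_{K̇} of v̇ equals the localization of O_K at the multiplicative set {p^m : m ∈ ℕ}; equivalently, it is the smallest subring of K containing O_K in which p is a unit. -/
/-- For a valued field `K` of characteristic zero and residue characteristic `p > 0`, with
`Δ` the smallest convex subgroup of the value group containing `v p`, the valuation ring
`O_K̇ = {x : ∃ δ ∈ Δ, v x ≥ δ}` of the coarse valuation equals the localization of `O_K`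
at the multiplicative set `{p ^ m : m ∈ ℕ}`, i.e. the set of elements `y / p ^ m` with
`y ∈ O_K`. -/
theorem coarse_valuation_ring_eq_localization
    {K Γ : Type*} [Field K] [CharZero K] [AddCommGroup Γ] [LinearOrder Γ] [IsOrderedAddMonoid Γ]
    (v : AddValuation K (WithTop Γ))
    (p : ℕ) (hp : p.Prime) (hres : 0 < v (p : K))
    (γp : Γ) (hγp : v (p : K) = (γp : WithTop Γ))
    -- `Δ` is the smallest convex subgroup of `Γ` containing `γp = v p`:
    (Δ : Set Γ) (hΔ : Δ = {γ : Γ | ∃ n : ℕ, -(n • γp) ≤ γ ∧ γ ≤ n • γp}) :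
    {x : K | ∃ δ ∈ Δ, (δ : WithTop Γ) ≤ v x} =
      {x : K | ∃ (m : ℕ) (y : K), 0 ≤ v y ∧ x = y / (p : K) ^ m} := by
  have hpK : (p : K) ≠ 0 := Nat.cast_ne_zero.mpr hp.ne_zero
  have hγp0 : (0 : Γ) ≤ γp := by
    have := hres
    rw [hγp] at this
    exact_mod_cast this.le
  have hvpow : ∀ m : ℕ, v ((p : K) ^ m) = ((m • γp : Γ) : WithTop Γ) := by
    intro m
    rw [v.map_pow, hγp]
    induction m with
    | zero => simp
    | succ n ih => rw [succ_nsmul, succ_nsmul, WithTop.coe_add, ← ih]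
  ext x
  simp only [Set.mem_setOf_eq, hΔ]
  constructor
  · rintro ⟨δ, ⟨n, hn1, _⟩, hδx⟩
    refine ⟨n, x * (p : K) ^ n, ?_, ?_⟩
    · rw [v.map_mul, hvpow]
      rcases eq_or_ne (v x) ⊤ with h | h
      · simp [h]
      · obtain ⟨g, hg⟩ := WithTop.ne_top_iff_exists.mp h
        rw [← hg, ← WithTop.coe_add]
        rw [← hg] at hδx
        have hδg : δ ≤ g := by exact_mod_cast hδx
        have h2 : -(n • γp) ≤ g := le_trans hn1 hδg
        have : (0 : Γ) ≤ g + n • γp := by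
          calc (0 : Γ) = -(n • γp) + n • γp := by simp
          _ ≤ g + n • γp := add_le_add_left h2 _
        exact_mod_cast this
    · field_simp
  · rintro ⟨m, y, hy, rfl⟩
    refine ⟨-(m • γp), ⟨m, le_refl _, neg_nonpos.mpr (nsmul_nonneg hγp0 m) |>.trans
      (nsmul_nonneg hγp0 m)⟩, ?_⟩
    rw [v.map_div, hvpow]
    rcases eq_or_ne (v y) ⊤ with h | h
    · simp [h]
    · obtain ⟨g, hg⟩ := WithTop.ne_top_iff_exists.mp h
      rw [← hg]
      rw [← hg] at hy
      have hg0 : (0 : Γ) ≤ g := by exact_mod_cast hy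
      rw [← WithTop.LinearOrderedAddCommGroup.coe_sub, WithTop.coe_le_coe]
      have : -(m • γp) ≤ g - m • γp := by
        calc -(m • γp) = 0 - m • γp := by simp
        _ ≤ g - m • γp := sub_le_sub_right hg0 _
      exact this
end

section
/- Let L be a field and g a polynomial in one variable over the prime subfield of L with splitting field F inside L^{alg}. Then the set G_g = {σ ∈ Gal(L^{alg}/L) : Fix(σ) contains no root of g} is open in the absolute Galois group Gal(L) with the Krull topology. -/
open IntermediateField

private lemma fix_eq (L : Type*) [Field L] (x : AlgebraicClosure L) :
    {σ : AlgebraicClosure L ≃ₐ[L] AlgebraicClosure L | σ x = x} =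
      (IntermediateField.fixingSubgroup L⟮x⟯ : Set _) := by
  ext σ
  simp only [Set.mem_setOf_eq, SetLike.mem_coe, IntermediateField.mem_fixingSubgroup_iff]
  constructor
  · intro hσ y hy
    have hmem : σ ∈ MulAction.stabilizer
        (AlgebraicClosure L ≃ₐ[L] AlgebraicClosure L) x := hσ
    have hle : L⟮x⟯ ≤ IntermediateField.fixedField (Subgroup.zpowers σ) := by
      rw [IntermediateField.adjoin_simple_le_iff]
      rintro ⟨g, hg⟩
      obtain ⟨n, rfl⟩ := Subgroup.mem_zpowers_iff.mp hg
      exact Subgroup.zpow_mem _ hmem n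
    exact hle hy ⟨σ, Subgroup.mem_zpowers σ⟩
  · intro h
    exact h x (IntermediateField.mem_adjoin_simple_self L x)

private lemma isClosed_fix (L : Type*) [Field L] (x : AlgebraicClosure L) :
    IsClosed {σ : AlgebraicClosure L ≃ₐ[L] AlgebraicClosure L | σ x = x} := by
  have hx : IsIntegral L x := Algebra.IsIntegral.isIntegral x
  have : FiniteDimensional L L⟮x⟯ := IntermediateField.adjoin.finiteDimensional hx
  rw [fix_eq]
  exact IntermediateField.fixingSubgroup_isClosed L⟮x⟯

/-- Let `L` be a field and `g` a polynomial in one variable over the prime subfield of `L`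
(coded as an integer polynomial).  Then the set
`G_g = {σ ∈ Gal(L^alg/L) : Fix(σ) contains no root of g}` is open in the absolute Galois
group of `L` with the Krull topology.  (Here `Fix σ`, the fixed field of the closed
subgroup generated by `σ`, is the set of fixed points of `σ`.) -/
theorem isOpen_no_fixed_root
    (L : Type*) [Field L] (g : Polynomial ℤ) :
    IsOpen {σ : AlgebraicClosure L ≃ₐ[L] AlgebraicClosure L |
      ¬ ∃ x : AlgebraicClosure L, Polynomial.aeval x g = 0 ∧ σ x = x} := by
  classical
  have haev : ∀ x : AlgebraicClosure L, Polynomial.aeval x g =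
      (g.map (algebraMap ℤ (AlgebraicClosure L))).eval x := fun x => by
    rw [Polynomial.aeval_def, Polynomial.eval_map]
  by_cases hg : (g.map (algebraMap ℤ (AlgebraicClosure L))) = 0
  · convert isOpen_empty
    ext σ
    simp only [Set.mem_setOf_eq, Set.mem_empty_iff_false, iff_false, not_not]
    exact ⟨0, by rw [haev, hg, Polynomial.eval_zero], map_zero σ⟩
  · have : {σ : AlgebraicClosure L ≃ₐ[L] AlgebraicClosure L |
        ¬ ∃ x : AlgebraicClosure L, Polynomial.aeval x g = 0 ∧ σ x = x} =
        ⋂ x ∈ (g.map (algebraMap ℤ (AlgebraicClosure L))).roots.toFinset,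
          {σ : AlgebraicClosure L ≃ₐ[L] AlgebraicClosure L | σ x = x}ᶜ := by
      ext σ
      simp only [Set.mem_setOf_eq, Set.mem_iInter, Set.mem_compl_iff,
        Multiset.mem_toFinset, Polynomial.mem_roots hg, Polynomial.IsRoot, not_exists]
      constructor
      · intro h x hx hfix
        exact h x ⟨by rw [haev]; exact hx, hfix⟩
      · intro h x hx
        exact h x (by rw [haev] at hx; exact hx.1) hx.2
    rw [this]
    exact isOpen_biInter_finset fun x _ => (isClosed_fix L x).isOpen_compl
end
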